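/- Let X be a finite metric space with an even number n = 2k+2 ≥ 4 of points that embeds isometrically into the real line ℝ. Then t_b(X) ≥ t_d(X). -/
import Mathlib


/-- The largest distance from `x` to any point of `X`. -/
noncomputable def ptTd (X : Type*) [MetricSpace X] (x : X) : ℝ :=
  sSup (Set.range fun y => dist x y)

/-- The second largest distance (counted with multiplicity over points) from `x`
to points of `X`. -/
noncomputable def ptTb (X : Type*) [MetricSpace X] (x : X) : ℝ :=
  sSup {r : ℝ | ∃ y z : X, y ≠ z ∧ r = min (dist x y) (dist x z)}

/-- `t_b(X) = max_{x ∈ X} t_b(x)`. -/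
noncomputable def tbX (X : Type*) [MetricSpace X] : ℝ :=
  sSup (Set.range (ptTb X))

/-- `t_d(X) = min_{x ∈ X} t_d(x)`. -/
noncomputable def tdX (X : Type*) [MetricSpace X] : ℝ :=
  sInf (Set.range (ptTd X))

/-- A finite metric space with `2k+2 ≥ 4` points that embeds isometrically in the real
line satisfies `t_b(X) ≥ t_d(X)`. -/
theorem tbX_ge_tdX_of_isometry_to_real (X : Type*) [MetricSpace X] [Fintype X]
    (k : ℕ) (hk : 1 ≤ k) (hcard : Fintype.card X = 2 * k + 2)
    (f : X → ℝ) (hf : Isometry f) :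
    tdX X ≤ tbX X := by
  have hcard3 : 3 ≤ Fintype.card X := by omega
  have hinj : Function.Injective f := hf.injective
  have hdist : ∀ x y : X, dist x y = |f x - f y| := by
    intro x y
    rw [← hf.dist_eq x y, Real.dist_eq]
  -- general facts
  have htd_le : ∀ x : X, tdX X ≤ ptTd X x := fun x =>
    csInf_le (Set.Finite.bddBelow (Set.finite_range _)) (Set.mem_range_self x)
  have htb_le : ∀ x : X, ptTb X x ≤ tbX X := fun x =>
    le_csSup (Set.Finite.bddAbove (Set.finite_range _)) (Set.mem_range_self x)
  have hle_tb : ∀ (x y z : X), y ≠ z → min (dist x y) (dist x z) ≤ ptTb X x := by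
    intro x y z hyz
    apply le_csSup
    · apply BddAbove.mono (s := {r : ℝ | ∃ y z : X, y ≠ z ∧ r = min (dist x y) (dist x z)})
        (t := Set.range fun p : X × X => min (dist x p.1) (dist x p.2))
      · rintro r ⟨y', z', _, rfl⟩
        exact ⟨(y', z'), rfl⟩
      · exact Set.Finite.bddAbove (Set.finite_range _)
    · exact ⟨y, z, hyz, rfl⟩
  have hptTd_le : ∀ (x : X) (r : ℝ), 0 ≤ r → (∀ y : X, dist x y ≤ r) → ptTd X x ≤ r := by
    intro x r hr h
    exact Real.sSup_le (by rintro _ ⟨y, rfl⟩; exact h y) hr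
  -- extremal points
  have : Nonempty X := Fintype.card_pos_iff.mp (by omega)
  classical
  obtain ⟨a, ha⟩ := Finite.exists_min f
  obtain ⟨b, hb⟩ := Finite.exists_max f
  have hnea : (Finset.univ.erase a).Nonempty := by
    rw [← Finset.card_pos, Finset.card_erase_of_mem (Finset.mem_univ a), Finset.card_univ]
    omega
  have hneb : (Finset.univ.erase b).Nonempty := by
    rw [← Finset.card_pos, Finset.card_erase_of_mem (Finset.mem_univ b), Finset.card_univ]
    omega
  obtain ⟨a', ha'mem, ha'⟩ := Finset.exists_min_image (Finset.univ.erase a) f hnea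
  obtain ⟨b', hb'mem, hb'⟩ := Finset.exists_max_image (Finset.univ.erase b) f hneb
  have haa' : a ≠ a' := (Finset.ne_of_mem_erase ha'mem).symm
  have hbb' : b ≠ b' := (Finset.ne_of_mem_erase hb'mem).symm
  by_cases hcase : f a' - f a ≤ f b - f a'
  · -- t_d(a') ≤ f b - f a' = min (dist b a) (dist b a') ≤ t_b(b)
    have h1 : tdX X ≤ f b - f a' := by
      refine le_trans (htd_le a') (hptTd_le a' _ (by linarith [hb a']) ?_)
      intro y
      rw [hdist]
      rw [abs_sub_le_iff]
      constructor
      · have : f a ≤ f y := ha y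
        linarith
      · have : f y ≤ f b := hb y
        linarith
    have h2 : f b - f a' ≤ tbX X := by
      refine le_trans ?_ (le_trans (hle_tb b a a' haa') (htb_le b))
      have hba : dist b a = f b - f a := by
        rw [hdist, abs_of_nonneg (by linarith [ha b])]
      have hba' : dist b a' = f b - f a' := by
        rw [hdist, abs_of_nonneg (by linarith [hb a'])]
      rw [hba, hba']
      have : f a ≤ f a' := ha a'
      simp only [le_min_iff]
      constructor <;> linarith
    linarith
  · push_neg at hcase
    -- a' ≠ b, so f a' ≤ f b'
    have ha'b : a' ≠ b := by
      intro h
      -- then every point other than a has f-value f b, contradicting card ≥ 3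
      have hne2 : ((Finset.univ.erase a).erase a').Nonempty := by
        rw [← Finset.card_pos, Finset.card_erase_of_mem
          (Finset.mem_erase.mpr ⟨haa'.symm, Finset.mem_univ a'⟩),
          Finset.card_erase_of_mem (Finset.mem_univ a), Finset.card_univ]
        omega
      obtain ⟨c, hc⟩ := hne2
      have hca' : c ≠ a' := (Finset.mem_erase.mp hc).1
      have hca : c ∈ Finset.univ.erase a := (Finset.mem_erase.mp hc).2
      have h1 : f a' ≤ f c := ha' c hca
      have h2 : f c ≤ f a' := by rw [h]; exact hb c
      exact hca' (hinj (le_antisymm h2 h1))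
    have ha'b' : f a' ≤ f b' :=
      hb' a' (Finset.mem_erase.mpr ⟨ha'b, Finset.mem_univ a'⟩)
    have h1 : tdX X ≤ f b' - f a := by
      refine le_trans (htd_le b') (hptTd_le b' _ (by linarith [ha b']) ?_)
      intro y
      rw [hdist, abs_sub_le_iff]
      constructor
      · have : f a ≤ f y := ha y
        linarith
      · -- f y - f b' ≤ f b' - f a
        rcases eq_or_ne y b with rfl | hyb
        · linarith [ha a']
        · have : f y ≤ f b' := hb' y (Finset.mem_erase.mpr ⟨hyb, Finset.mem_univ y⟩)
          linarith [ha b']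
    have h2 : f b' - f a ≤ tbX X := by
      refine le_trans ?_ (le_trans (hle_tb a b b' hbb') (htb_le a))
      have hab : dist a b = f b - f a := by
        rw [hdist, abs_sub_comm, abs_of_nonneg (by linarith [ha b])]
      have hab' : dist a b' = f b' - f a := by
        rw [hdist, abs_sub_comm, abs_of_nonneg (by linarith [ha b'])]
      rw [hab, hab']
      have : f b' ≤ f b := hb b'
      simp only [le_min_iff]
      constructor <;> linarith
    linarith
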